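/- arXiv:1412.6085 — 4 statements merged into one kernel-verified Lean document; each statement's English description precedes it below -/
import Mathlib

section
/- Let λ₁ < μ₁ < λ₂ < ⋯ < μ_{n-1} < λₙ be 2n-1 real numbers with λ_j = -λ_{n+1-j} for all j and μ_k = -μ_{n-k} for all k. Let f(x) = ∏_{j=1}^n (x - i·λ_j) and g(x) = ∏_{j=1}^{n-1} (x - i·μ_j). Then f(x)/g(x) = x + Σ_{j=1}^{n-1} c_j/(x - i·μ_j), where each c_j is a positive real number given by c_k = -(∏_{j=1}^n (μ_k - λ_j)) / (∏_{j≠k} (μ_k - μ_j)). -/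
open Polynomial Complex Finset

private lemma prod_neg_aux {α : Type*} (s : Finset α) (f : α → ℝ) :
    ∏ i ∈ s, (-f i) = (-1) ^ s.card * ∏ i ∈ s, f i := by
  rw [← Finset.prod_const, ← Finset.prod_mul_distrib]; simp

/-- Partial fraction decomposition: with symmetric strictly interlacing data,
`f(x)/g(x) = x + Σ_j c_j/(x - i μ_j)` where each residue
`c_k = -(∏_j (μ_k - λ_j)) / (∏_{j≠k} (μ_k - μ_j))` is a positive real number. -/
theorem stmt_4 {m : ℕ} (hm : 1 ≤ m) (lam : Fin (m + 1) → ℝ) (mu : Fin m → ℝ)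
    (hinter : ∀ j : Fin m, lam j.castSucc < mu j ∧ mu j < lam j.succ)
    (hlamsym : ∀ j, lam j = -lam (Fin.rev j))
    (hmusym : ∀ k, mu k = -mu (Fin.rev k))
    (c : Fin m → ℝ)
    (hc : ∀ k, c k = -(∏ j, (mu k - lam j)) / (∏ j ∈ Finset.univ.erase k, (mu k - mu j))) :
    (∀ k, 0 < c k) ∧
    (algebraMap (Polynomial ℂ) (RatFunc ℂ) (∏ j, (X - C (Complex.I * (lam j : ℂ))))) /
      (algebraMap (Polynomial ℂ) (RatFunc ℂ) (∏ j, (X - C (Complex.I * (mu j : ℂ)))))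
    = RatFunc.X + ∑ k, RatFunc.C ((c k : ℂ)) / (RatFunc.X - RatFunc.C (Complex.I * (mu k : ℂ))) := by
  classical
  -- ordering facts
  have hlam_mono : StrictMono lam := Fin.strictMono_iff_lt_succ.2 fun i =>
    (hinter i).1.trans (hinter i).2
  have hA : ∀ (j : Fin (m+1)) (k : Fin m), (j : ℕ) ≤ (k : ℕ) → lam j < mu k := by
    intro j k hjk
    have h1 : lam j ≤ lam k.castSucc := hlam_mono.monotone (Fin.le_def.mpr (by simpa using hjk))
    exact h1.trans_lt (hinter k).1
  have hB : ∀ (j : Fin (m+1)) (k : Fin m), (k : ℕ) < (j : ℕ) → mu k < lam j := by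
    intro j k hkj
    have h1 : lam k.succ ≤ lam j := hlam_mono.monotone (Fin.le_def.mpr (by simpa using hkj))
    exact (hinter k).2.trans_le h1
  have hmu_mono : StrictMono mu := by
    intro k k' hk
    have h1 : mu k < lam k'.castSucc := hB _ _ (by simpa using (Fin.lt_def.mp hk))
    exact h1.trans (hinter k').1
  -- positivity of residues and nonvanishing of denominators
  have key : ∀ k : Fin m, 0 < c k ∧ (∏ j ∈ Finset.univ.erase k, (mu k - mu j)) ≠ 0 := by
    intro k
    set b : ℕ := m - 1 - (k : ℕ) with hb
    -- split numerator
    have hN : (∏ j, (mu k - lam j)) =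
        (∏ j ∈ univ.filter (fun j : Fin (m+1) => (k : ℕ) < (j : ℕ)), (mu k - lam j)) *
        (∏ j ∈ univ.filter (fun j : Fin (m+1) => ¬ (k : ℕ) < (j : ℕ)), (mu k - lam j)) :=
      (Finset.prod_filter_mul_prod_filter_not univ _ _).symm
    have hcardN : (univ.filter (fun j : Fin (m+1) => (k : ℕ) < (j : ℕ))).card = b + 1 := by
      have h : univ.filter (fun j : Fin (m+1) => (k : ℕ) < (j : ℕ)) = Finset.Ioi k.castSucc := by
        ext j
        simp only [Finset.mem_filter, Finset.mem_univ, true_and, Finset.mem_Ioi, Fin.lt_def,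
          Fin.coe_castSucc]
      rw [h, Fin.card_Ioi]
      have := k.isLt
      simp only [Fin.coe_castSucc, hb]
      omega
    have hN1 : ∀ j ∈ univ.filter (fun j : Fin (m+1) => (k : ℕ) < (j : ℕ)),
        0 < lam j - mu k := by
      intro j hj
      simp only [Finset.mem_filter] at hj
      exact sub_pos.2 (hB j k hj.2)
    have hN2 : ∀ j ∈ univ.filter (fun j : Fin (m+1) => ¬ (k : ℕ) < (j : ℕ)),
        0 < mu k - lam j := by
      intro j hj
      simp only [Finset.mem_filter] at hj
      exact sub_pos.2 (hA j k (by omega))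
    -- split denominator
    have hD : (∏ j ∈ Finset.univ.erase k, (mu k - mu j)) =
        (∏ j ∈ (Finset.univ.erase k).filter (fun j : Fin m => (k : ℕ) < (j : ℕ)), (mu k - mu j)) *
        (∏ j ∈ (Finset.univ.erase k).filter (fun j : Fin m => ¬ (k : ℕ) < (j : ℕ)), (mu k - mu j)) :=
      (Finset.prod_filter_mul_prod_filter_not _ _ _).symm
    have hcardD : ((Finset.univ.erase k).filter (fun j : Fin m => (k : ℕ) < (j : ℕ))).card = b := by
      have h : (Finset.univ.erase k).filter (fun j : Fin m => (k : ℕ) < (j : ℕ)) = Finset.Ioi k := by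
        ext j
        simp only [Finset.mem_filter, Finset.mem_erase, Finset.mem_univ, true_and,
          Finset.mem_Ioi, Fin.lt_def, Fin.ext_iff, and_true]
        omega
      rw [h, Fin.card_Ioi]
    have hD1 : ∀ j ∈ (Finset.univ.erase k).filter (fun j : Fin m => (k : ℕ) < (j : ℕ)),
        0 < mu j - mu k := by
      intro j hj
      simp only [Finset.mem_filter] at hj
      exact sub_pos.2 (hmu_mono (Fin.lt_def.mpr hj.2))
    have hD2 : ∀ j ∈ (Finset.univ.erase k).filter (fun j : Fin m => ¬ (k : ℕ) < (j : ℕ)),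
        0 < mu k - mu j := by
      intro j hj
      simp only [Finset.mem_filter, Finset.mem_erase, Finset.mem_univ, true_and] at hj
      refine sub_pos.2 (hmu_mono (Fin.lt_def.mpr ?_))
      rcases lt_or_eq_of_le (not_lt.1 hj.2) with h | h
      · exact h
      · exact absurd (Fin.ext h) hj.1.1
    -- rewrite the sign of the negative parts
    have hNrw : (∏ j ∈ univ.filter (fun j : Fin (m+1) => (k : ℕ) < (j : ℕ)), (mu k - lam j)) =
        (-1 : ℝ) ^ (b + 1) *
          ∏ j ∈ univ.filter (fun j : Fin (m+1) => (k : ℕ) < (j : ℕ)), (lam j - mu k) := by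
      rw [← hcardN, ← prod_neg_aux]
      exact Finset.prod_congr rfl fun j _ => by ring
    have hDrw : (∏ j ∈ (Finset.univ.erase k).filter (fun j : Fin m => (k : ℕ) < (j : ℕ)),
          (mu k - mu j)) =
        (-1 : ℝ) ^ b *
          ∏ j ∈ (Finset.univ.erase k).filter (fun j : Fin m => (k : ℕ) < (j : ℕ)),
            (mu j - mu k) := by
      rw [← hcardD, ← prod_neg_aux]
      exact Finset.prod_congr rfl fun j _ => by ring
    have hPN1 : 0 < ∏ j ∈ univ.filter (fun j : Fin (m+1) => (k : ℕ) < (j : ℕ)), (lam j - mu k) :=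
      Finset.prod_pos hN1
    have hPN2 : 0 < ∏ j ∈ univ.filter (fun j : Fin (m+1) => ¬ (k : ℕ) < (j : ℕ)),
        (mu k - lam j) := Finset.prod_pos hN2
    have hPD1 : 0 < ∏ j ∈ (Finset.univ.erase k).filter (fun j : Fin m => (k : ℕ) < (j : ℕ)),
        (mu j - mu k) := Finset.prod_pos hD1
    have hPD2 : 0 < ∏ j ∈ (Finset.univ.erase k).filter (fun j : Fin m => ¬ (k : ℕ) < (j : ℕ)),
        (mu k - mu j) := Finset.prod_pos hD2
    have hpow : ((-1 : ℝ) ^ b) ≠ 0 := pow_ne_zero _ (by norm_num)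
    constructor
    · rw [hc k, hN, hD, hNrw, hDrw]
      have hrw : -((-1 : ℝ) ^ (b + 1) *
            (∏ j ∈ univ.filter (fun j : Fin (m+1) => (k : ℕ) < (j : ℕ)), (lam j - mu k)) *
            (∏ j ∈ univ.filter (fun j : Fin (m+1) => ¬ (k : ℕ) < (j : ℕ)), (mu k - lam j))) /
          ((-1 : ℝ) ^ b *
            (∏ j ∈ (Finset.univ.erase k).filter (fun j : Fin m => (k : ℕ) < (j : ℕ)),
              (mu j - mu k)) *
            (∏ j ∈ (Finset.univ.erase k).filter (fun j : Fin m => ¬ (k : ℕ) < (j : ℕ)),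
              (mu k - mu j))) =
          ((-1 : ℝ) ^ b *
            ((∏ j ∈ univ.filter (fun j : Fin (m+1) => (k : ℕ) < (j : ℕ)), (lam j - mu k)) *
             (∏ j ∈ univ.filter (fun j : Fin (m+1) => ¬ (k : ℕ) < (j : ℕ)), (mu k - lam j)))) /
          ((-1 : ℝ) ^ b *
            ((∏ j ∈ (Finset.univ.erase k).filter (fun j : Fin m => (k : ℕ) < (j : ℕ)),
              (mu j - mu k)) *
             (∏ j ∈ (Finset.univ.erase k).filter (fun j : Fin m => ¬ (k : ℕ) < (j : ℕ)),
              (mu k - mu j)))) := by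
        rw [pow_succ]; ring
      rw [hrw, mul_div_mul_left _ _ hpow]
      exact div_pos (mul_pos hPN1 hPN2) (mul_pos hPD1 hPD2)
    · rw [hD, hDrw]
      exact mul_ne_zero (mul_ne_zero hpow hPD1.ne') hPD2.ne'
  -- symmetry gives vanishing sums
  have hsum_lam : ∑ j, lam j = 0 := by
    have h1 : ∑ j, lam (Fin.rev j) = ∑ j, lam j :=
      Fintype.sum_equiv Fin.revPerm _ _ (fun i => rfl)
    have h2 : ∑ j, lam j = -∑ j, lam j := by
      calc ∑ j, lam j = ∑ j, -lam (Fin.rev j) := Finset.sum_congr rfl fun j _ => hlamsym j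
        _ = -∑ j, lam (Fin.rev j) := Finset.sum_neg_distrib _
        _ = -∑ j, lam j := by rw [h1]
    linarith
  have hsum_mu : ∑ j, mu j = 0 := by
    have h1 : ∑ j, mu (Fin.rev j) = ∑ j, mu j :=
      Fintype.sum_equiv Fin.revPerm _ _ (fun i => rfl)
    have h2 : ∑ j, mu j = -∑ j, mu j := by
      calc ∑ j, mu j = ∑ j, -mu (Fin.rev j) := Finset.sum_congr rfl fun j _ => hmusym j
        _ = -∑ j, mu (Fin.rev j) := Finset.sum_neg_distrib _
        _ = -∑ j, mu j := by rw [h1]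
    linarith
  -- the polynomials
  set f : ℂ[X] := ∏ j, (X - C (Complex.I * (lam j : ℂ))) with hfdef
  set g : ℂ[X] := ∏ j, (X - C (Complex.I * (mu j : ℂ))) with hgdef
  have hmonf : f.Monic := monic_prod_of_monic _ _ fun j _ => monic_X_sub_C _
  have hmong : g.Monic := monic_prod_of_monic _ _ fun j _ => monic_X_sub_C _
  have hdegf : f.natDegree = m + 1 := by
    rw [hfdef, natDegree_prod_of_monic _ _ fun j _ => monic_X_sub_C _]
    simp only [natDegree_X_sub_C]
    simp
  have hdegg : g.natDegree = m := by
    rw [hgdef, natDegree_prod_of_monic _ _ fun j _ => monic_X_sub_C _]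
    simp only [natDegree_X_sub_C]
    simp
  have hsum_lamC : ∑ j, Complex.I * (lam j : ℂ) = 0 := by
    rw [← Finset.mul_sum]
    have h : ∑ j, ((lam j : ℝ) : ℂ) = ((∑ j, lam j : ℝ) : ℂ) := by push_cast; rfl
    rw [h, hsum_lam]; simp
  have hsum_muC : ∑ j, Complex.I * (mu j : ℂ) = 0 := by
    rw [← Finset.mul_sum]
    have h : ∑ j, ((mu j : ℝ) : ℂ) = ((∑ j, mu j : ℝ) : ℂ) := by push_cast; rfl
    rw [h, hsum_mu]; simp
  have hnextf : f.coeff m = 0 := by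
    have h1 : f.nextCoeff = -∑ j, Complex.I * (lam j : ℂ) := by
      rw [hfdef]; exact prod_X_sub_C_nextCoeff _
    have h2 : f.nextCoeff = f.coeff m := by
      rw [nextCoeff_of_natDegree_pos (by omega), hdegf]
      norm_num
    rw [← h2, h1, hsum_lamC, neg_zero]
  have hnextg : g.coeff (m - 1) = 0 := by
    have h1 : g.nextCoeff = -∑ j, Complex.I * (mu j : ℂ) := by
      rw [hgdef]; exact prod_X_sub_C_nextCoeff _
    have h2 : g.nextCoeff = g.coeff (m - 1) := by
      rw [nextCoeff_of_natDegree_pos (by omega), hdegg]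
    rw [← h2, h1, hsum_muC, neg_zero]
  set q : ℂ[X] := ∑ k, C ((c k : ℂ)) * ∏ j ∈ Finset.univ.erase k,
      (X - C (Complex.I * (mu j : ℂ))) with hqdef
  -- degree bounds
  have hdegp : (f - X * g).degree < ((m : ℕ) : WithBot ℕ) := by
    rw [degree_lt_iff_coeff_zero]
    intro k hk
    have hk' : m ≤ k := by exact_mod_cast hk
    rw [coeff_sub]
    have hXg : ∀ n : ℕ, (X * g).coeff (n + 1) = g.coeff n := fun n => coeff_X_mul g n
    obtain ⟨k', hk1⟩ : ∃ k', m = k' + 1 := ⟨m - 1, by omega⟩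
    rcases show k = m ∨ k = m + 1 ∨ m + 2 ≤ k by omega with hkm | hkm | hk2
    · have h3 : g.coeff k' = 0 := by
        have h4 := hnextg
        rwa [hk1, Nat.add_sub_cancel] at h4
      rw [hkm, hk1, hXg k', h3, sub_zero, ← hk1, hnextf]
    · have h1 : f.coeff (m + 1) = 1 := by
        have h := hmonf.coeff_natDegree
        rwa [hdegf] at h
      have h2 : g.coeff m = 1 := by
        have h := hmong.coeff_natDegree
        rwa [hdegg] at h
      rw [hkm, hXg m, h1, h2, sub_self]
    · obtain ⟨t, ht⟩ : ∃ t, k = t + 1 := ⟨k - 1, by omega⟩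
      rw [ht, hXg t]
      rw [coeff_eq_zero_of_natDegree_lt (by omega),
        coeff_eq_zero_of_natDegree_lt (by omega), sub_zero]
  have hdegq : q.degree < ((m : ℕ) : WithBot ℕ) := by
    rw [hqdef]
    refine lt_of_le_of_lt (degree_sum_le _ _) ?_
    rw [Finset.sup_lt_iff (by exact WithBot.bot_lt_coe m)]
    intro k _
    have hmonp : (∏ j ∈ Finset.univ.erase k, (X - C (Complex.I * (mu j : ℂ)))).Monic :=
      monic_prod_of_monic _ _ fun j _ => monic_X_sub_C _
    have hd : (∏ j ∈ Finset.univ.erase k, (X - C (Complex.I * (mu j : ℂ)))).degree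
        = ((m - 1 : ℕ) : WithBot ℕ) := by
      rw [degree_eq_natDegree hmonp.ne_zero,
        natDegree_prod_of_monic _ _ fun j _ => monic_X_sub_C _]
      simp only [natDegree_X_sub_C]
      simp [Finset.card_erase_of_mem]
    calc (C ((c k : ℂ)) * ∏ j ∈ Finset.univ.erase k,
          (X - C (Complex.I * (mu j : ℂ)))).degree
        ≤ 0 + ((m - 1 : ℕ) : WithBot ℕ) := by
          rw [← hd]; exact (degree_mul_le _ _).trans (add_le_add degree_C_le le_rfl)
      _ < ((m : ℕ) : WithBot ℕ) := by
          rw [zero_add]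
          exact_mod_cast show m - 1 < m by omega
  -- evaluation at the nodes
  have hgz : ∀ i : Fin m, g.eval (Complex.I * (mu i : ℂ)) = 0 := by
    intro i
    rw [hgdef, eval_prod]
    exact Finset.prod_eq_zero (Finset.mem_univ i) (by simp)
  have hDC : ∀ i : Fin m, (∏ j ∈ Finset.univ.erase i, ((mu i : ℂ) - (mu j : ℂ))) ≠ 0 := by
    intro i
    have hcast : ((∏ j ∈ Finset.univ.erase i, (mu i - mu j) : ℝ) : ℂ)
        = ∏ j ∈ Finset.univ.erase i, ((mu i : ℂ) - (mu j : ℂ)) := by push_cast; rfl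
    rw [← hcast]
    exact Complex.ofReal_ne_zero.2 (key i).2
  have heval : ∀ i ∈ (Finset.univ : Finset (Fin m)),
      (f - X * g).eval (Complex.I * (mu i : ℂ)) = q.eval (Complex.I * (mu i : ℂ)) := by
    intro i _
    rw [eval_sub, eval_mul, eval_X, hgz i, mul_zero, sub_zero, hqdef, eval_finset_sum]
    rw [Finset.sum_eq_single i (fun k _ hki => by
      rw [eval_mul, eval_prod]
      rw [Finset.prod_eq_zero (Finset.mem_erase.2 ⟨hki.symm, Finset.mem_univ i⟩) (by simp),
        mul_zero]) (fun h => absurd (Finset.mem_univ i) h)]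
    rw [hfdef]
    simp only [eval_mul, eval_C, eval_prod, eval_sub, eval_X]
    -- residue identity
    have e1 : ∏ j, (Complex.I * (mu i : ℂ) - Complex.I * (lam j : ℂ))
        = Complex.I ^ (m + 1) * ∏ j, ((mu i : ℂ) - (lam j : ℂ)) := by
      calc ∏ j, (Complex.I * (mu i : ℂ) - Complex.I * (lam j : ℂ))
          = ∏ j : Fin (m+1), (Complex.I * ((mu i : ℂ) - (lam j : ℂ))) :=
            Finset.prod_congr rfl fun j _ => by ring
        _ = (∏ _j : Fin (m+1), Complex.I) * ∏ j, ((mu i : ℂ) - (lam j : ℂ)) :=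
            Finset.prod_mul_distrib
        _ = Complex.I ^ (m + 1) * ∏ j, ((mu i : ℂ) - (lam j : ℂ)) := by
            rw [Finset.prod_const]; simp
    have e2 : ∏ j ∈ Finset.univ.erase i, (Complex.I * (mu i : ℂ) - Complex.I * (mu j : ℂ))
        = Complex.I ^ (m - 1) * ∏ j ∈ Finset.univ.erase i, ((mu i : ℂ) - (mu j : ℂ)) := by
      calc ∏ j ∈ Finset.univ.erase i, (Complex.I * (mu i : ℂ) - Complex.I * (mu j : ℂ))
          = ∏ j ∈ Finset.univ.erase i, (Complex.I * ((mu i : ℂ) - (mu j : ℂ))) :=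
            Finset.prod_congr rfl fun j _ => by ring
        _ = (∏ _j ∈ Finset.univ.erase i, Complex.I) *
              ∏ j ∈ Finset.univ.erase i, ((mu i : ℂ) - (mu j : ℂ)) :=
            Finset.prod_mul_distrib
        _ = Complex.I ^ (m - 1) * ∏ j ∈ Finset.univ.erase i, ((mu i : ℂ) - (mu j : ℂ)) := by
            rw [Finset.prod_const]
            simp [Finset.card_erase_of_mem]
    have hci : ((c i : ℂ)) = -(∏ j, ((mu i : ℂ) - (lam j : ℂ))) /
        (∏ j ∈ Finset.univ.erase i, ((mu i : ℂ) - (mu j : ℂ))) := by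
      rw [hc i]; push_cast; rfl
    rw [e1, e2, hci]
    have hipow : Complex.I ^ (m + 1) = -Complex.I ^ (m - 1) := by
      rw [show m + 1 = (m - 1) + 2 by omega, pow_add, Complex.I_sq]; ring
    rw [hipow, div_mul_eq_mul_div, eq_div_iff (hDC i)]
    ring
  -- the polynomial identity
  have hinj : Set.InjOn (fun k : Fin m => Complex.I * (mu k : ℂ)) (Finset.univ : Finset (Fin m)) := by
    intro a _ b _ h
    have h2 : ((mu a : ℝ) : ℂ) = ((mu b : ℝ) : ℂ) := mul_left_cancel₀ Complex.I_ne_zero h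
    exact hmu_mono.injective (by exact_mod_cast h2)
  have hcard : ((#(Finset.univ : Finset (Fin m)) : ℕ) : WithBot ℕ) = ((m : ℕ) : WithBot ℕ) := by
    simp
  have hpq : f - X * g = q :=
    Polynomial.eq_of_degrees_lt_of_eval_index_eq Finset.univ hinj
      (by rw [hcard]; exact hdegp) (by rw [hcard]; exact hdegq) heval
  have hkey2 : f = X * g + q := sub_eq_iff_eq_add'.1 hpq
  -- final rational function computation
  refine ⟨fun k => (key k).1, ?_⟩
  have hg0 : algebraMap ℂ[X] (RatFunc ℂ) g ≠ 0 := RatFunc.algebraMap_ne_zero hmong.ne_zero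
  rw [hkey2, map_add, map_mul, add_div]
  congr 1
  · rw [mul_div_cancel_right₀ _ hg0, RatFunc.algebraMap_X]
  · rw [hqdef, map_sum, Finset.sum_div]
    refine Finset.sum_congr rfl fun k _ => ?_
    have hsplit : g = (X - C (Complex.I * (mu k : ℂ))) *
        ∏ j ∈ Finset.univ.erase k, (X - C (Complex.I * (mu j : ℂ))) := by
      rw [hgdef]; exact (Finset.mul_prod_erase univ _ (Finset.mem_univ k)).symm
    have hne : algebraMap ℂ[X] (RatFunc ℂ)
        (∏ j ∈ Finset.univ.erase k, (X - C (Complex.I * (mu j : ℂ)))) ≠ 0 :=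
      RatFunc.algebraMap_ne_zero
        (monic_prod_of_monic _ _ fun j _ => monic_X_sub_C _).ne_zero
    rw [hsplit, map_mul, map_mul, mul_div_mul_right _ _ hne, RatFunc.algebraMap_C, map_sub,
      RatFunc.algebraMap_X, RatFunc.algebraMap_C]
end

section
/- Let T be a tree on vertices 1,…,n, v a vertex of T, and A a real skew-symmetric matrix with graph T. Then C_A(x)/C_{A(v)}(x) = x + Σ_{j ∈ N(v)} a_{vj}² · C_{A_{j'}(v)}(x)/C_{A_j(v)}(x), where the sum is over neighbors j of v. -/
open Polynomial Matrix Finset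
open scoped Classical

noncomputable section

/-- The principal submatrix of `A` on the index set `S`. -/
def subOn {N : ℕ} (A : Matrix (Fin N) (Fin N) ℝ) (S : Finset (Fin N)) :
    Matrix {x // x ∈ S} {x // x ∈ S} ℝ :=
  A.submatrix (fun x => x.1) (fun x => x.1)

/-- The vertex set of the connected component of `v` in the subgraph of `G`
induced on `S`. -/
def comp {N : ℕ} (G : SimpleGraph (Fin N)) (S : Finset (Fin N)) (v : Fin N) :
    Finset (Fin N) :=
  S.filter (fun u => ∃ w : G.Walk v u, ∀ x ∈ w.support, x ∈ S)

section MatrixLemmas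

variable {R : Type*} [CommRing R] {K : Type*} [Field K]
variable {n : Type*} [Fintype n] [DecidableEq n]

instance uniqueEqSub (i : n) : Unique {x : n // x = i} :=
  ⟨⟨⟨i, rfl⟩⟩, fun a => Subtype.ext a.2⟩

lemma my_det_updateRow_single (M : Matrix n n R) (i : n) :
    (M.updateRow i (Pi.single i 1)).det
      = (M.submatrix (fun x : {x : n // ¬ x = i} => x.1) (fun x => x.1)).det := by
  classical
  set u := M.updateRow i (Pi.single i 1) with hu
  let e := Equiv.sumCompl (fun x : n => x = i)
  have h1 : u.det = (u.submatrix e e).det := (Matrix.det_submatrix_equiv_self e u).symm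
  have h2 : u.submatrix e e =
      Matrix.fromBlocks (Matrix.of fun _ _ => (1 : R)) 0
        (Matrix.of fun (a : {x : n // ¬ x = i}) (_ : {x : n // x = i}) => M a.1 i)
        (M.submatrix (fun x : {x : n // ¬ x = i} => x.1) (fun x => x.1)) := by
    ext x y
    cases x with
    | inl a =>
      obtain ⟨a, rfl⟩ := a
      cases y with
      | inl b =>
        obtain ⟨b, rfl⟩ := b
        simp [u, e, Matrix.submatrix_apply, Equiv.sumCompl]
      | inr b =>
        simp [u, e, Matrix.submatrix_apply, Equiv.sumCompl, Pi.single_eq_of_ne b.2]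
    | inr a =>
      cases y with
      | inl b =>
        obtain ⟨b, rfl⟩ := b
        simp [u, e, Matrix.submatrix_apply, Equiv.sumCompl, Matrix.updateRow_apply, a.2]
      | inr b =>
        simp [u, e, Matrix.submatrix_apply, Equiv.sumCompl, Matrix.updateRow_apply, a.2]
  rw [h1, h2, Matrix.det_fromBlocks_zero₁₂]
  have : (Matrix.of fun (_ : {x : n // x = i}) (_ : {x : n // x = i}) => (1 : R)).det = 1 := by
    rw [Matrix.det_unique]; rfl
  rw [this, one_mul]

lemma my_adjugate_diag (M : Matrix n n R) (i : n) :
    M.adjugate i i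
      = (M.submatrix (fun x : {x : n // ¬ x = i} => x.1) (fun x => x.1)).det := by
  rw [Matrix.adjugate_apply, my_det_updateRow_single]

lemma my_inv_diag (M : Matrix n n K) (i : n) :
    M⁻¹ i i
      = (M.submatrix (fun x : {x : n // ¬ x = i} => x.1) (fun x => x.1)).det / M.det := by
  rw [Matrix.inv_def]
  simp [Ring.inverse_eq_inv', my_adjugate_diag, div_eq_inv_mul]

end MatrixLemmas

set_option linter.unusedSectionVars false

section MatrixLemmas2

variable {R : Type*} [CommRing R] {K : Type*} [Field K]
variable {n : Type*} [Fintype n] [DecidableEq n]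

/-- Principal submatrix on the rows/columns satisfying `P`. -/
def psub (M : Matrix n n R) (P : n → Prop) : Matrix {x : n // P x} {x : n // P x} R :=
  M.submatrix (fun x => x.1) (fun x => x.1)

@[simp] lemma psub_apply (M : Matrix n n R) (P : n → Prop) (a b : {x : n // P x}) :
    psub M P a b = M a.1 b.1 := rfl

lemma my_det_split (M : Matrix n n R) (P : n → Prop) [DecidablePred P]
    (h1 : ∀ i j, P i → ¬ P j → M i j = 0) (h2 : ∀ i j, ¬ P i → P j → M i j = 0) :
    M.det = (psub M P).det * (psub M (fun x => ¬ P x)).det := by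
  classical
  let e := Equiv.sumCompl P
  have hdet : M.det = (M.submatrix e e).det := (Matrix.det_submatrix_equiv_self e M).symm
  have h3 : M.submatrix e e =
      Matrix.fromBlocks (psub M P) 0 0 (psub M (fun x => ¬ P x)) := by
    ext x y
    cases x with
    | inl a =>
      cases y with
      | inl b => rfl
      | inr b => simpa [e] using h1 a.1 b.1 a.2 b.2
    | inr a =>
      cases y with
      | inl b => simpa [e] using h2 a.1 b.1 a.2 b.2
      | inr b => rfl
  rw [hdet, h3, Matrix.det_fromBlocks_zero₁₂]

lemma my_inv_block (M : Matrix n n K) (P : n → Prop) [DecidablePred P]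
    (h1 : ∀ i j, P i → ¬ P j → M i j = 0) (h2 : ∀ i j, ¬ P i → P j → M i j = 0)
    (hd : IsUnit M.det) :
    (∀ i j (hi : P i) (hj : P j),
        M⁻¹ i j = (psub M P)⁻¹ ⟨i, hi⟩ ⟨j, hj⟩)
      ∧ (∀ i j, P i → ¬ P j → M⁻¹ i j = 0) := by
  classical
  have hsplit := my_det_split M P h1 h2
  have hp : IsUnit (psub M P).det := isUnit_of_mul_isUnit_left (by rw [← hsplit]; exact hd)
  have hq : IsUnit (psub M (fun x => ¬ P x)).det :=
    isUnit_of_mul_isUnit_right (by rw [← hsplit]; exact hd)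
  set B : Matrix n n K := Matrix.of fun i j =>
    if hi : P i then (if hj : P j then (psub M P)⁻¹ ⟨i, hi⟩ ⟨j, hj⟩ else 0)
    else (if hj : P j then 0 else (psub M (fun x => ¬ P x))⁻¹ ⟨i, hi⟩ ⟨j, hj⟩) with hB
  have key : M * B = 1 := by
    ext i j
    rw [Matrix.mul_apply]
    have hsum : ∀ f : n → K, (∑ k, f k) =
        (∑ a : {x : n // P x}, f a.1) + (∑ a : {x : n // ¬ P x}, f a.1) := by
      intro f
      rw [← Equiv.sum_comp (Equiv.sumCompl P) f, Fintype.sum_sum_type]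
      rfl
    rw [hsum]
    by_cases hi : P i <;> by_cases hj : P j
    · have e1 : (∑ a : {x : n // P x}, M i a.1 * B a.1 j)
          = (psub M P * (psub M P)⁻¹) ⟨i, hi⟩ ⟨j, hj⟩ := by
        rw [Matrix.mul_apply]
        apply Finset.sum_congr rfl
        intro a _
        simp [hB, a.2, hj]
      have e2 : (∑ a : {x : n // ¬ P x}, M i a.1 * B a.1 j) = 0 := by
        apply Finset.sum_eq_zero; intro a _; simp [hB, a.2, hj]
      rw [e1, e2, Matrix.mul_nonsing_inv _ hp, add_zero]
      by_cases hij : i = j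
      · subst hij; simp [Matrix.one_apply]
      · have : (⟨i, hi⟩ : {x : n // P x}) ≠ ⟨j, hj⟩ := by
          simp [Subtype.ext_iff, hij]
        simp [Matrix.one_apply, hij, this]
    · have e1 : (∑ a : {x : n // P x}, M i a.1 * B a.1 j) = 0 := by
        apply Finset.sum_eq_zero; intro a _; simp [hB, a.2, hj]
      have e2 : (∑ a : {x : n // ¬ P x}, M i a.1 * B a.1 j) = 0 := by
        apply Finset.sum_eq_zero; intro a _
        rw [h1 i a.1 hi a.2, zero_mul]
      have hij : i ≠ j := fun h => hj (h ▸ hi)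
      simp [e1, e2, Matrix.one_apply, hij]
    · have e1 : (∑ a : {x : n // P x}, M i a.1 * B a.1 j) = 0 := by
        apply Finset.sum_eq_zero; intro a _
        rw [h2 i a.1 hi a.2, zero_mul]
      have e2 : (∑ a : {x : n // ¬ P x}, M i a.1 * B a.1 j) = 0 := by
        apply Finset.sum_eq_zero; intro a _; simp [hB, a.2, hj]
      have hij : i ≠ j := fun h => hi (h ▸ hj)
      simp [e1, e2, Matrix.one_apply, hij]
    · have e1 : (∑ a : {x : n // P x}, M i a.1 * B a.1 j) = 0 := by
        apply Finset.sum_eq_zero; intro a _; simp [hB, a.2, hj]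
      have e2 : (∑ a : {x : n // ¬ P x}, M i a.1 * B a.1 j)
          = (psub M (fun x => ¬ P x) * (psub M (fun x => ¬ P x))⁻¹) ⟨i, hi⟩ ⟨j, hj⟩ := by
        rw [Matrix.mul_apply]
        apply Finset.sum_congr rfl
        intro a _
        simp [hB, a.2, hj]
      rw [e1, e2, Matrix.mul_nonsing_inv _ hq, zero_add]
      by_cases hij : i = j
      · subst hij; simp [Matrix.one_apply]
      · have : (⟨i, hi⟩ : {x : n // ¬ P x}) ≠ ⟨j, hj⟩ := by
          simp [Subtype.ext_iff, hij]
        simp [Matrix.one_apply, hij, this]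
  have hMinv : M⁻¹ = B := Matrix.inv_eq_right_inv key
  constructor
  · intro i j hi hj
    rw [hMinv]; simp [hB, hi, hj]
  · intro i j hi hj
    rw [hMinv]; simp [hB, hi, hj]

lemma my_schur (M : Matrix n n K) (v : n)
    (h : IsUnit (psub M (fun x => ¬ x = v)).det) :
    M.det = (psub M (fun x => ¬ x = v)).det *
      (M v v - ∑ j : {x : n // ¬ x = v}, ∑ k : {x : n // ¬ x = v},
        M v j.1 * (psub M (fun x => ¬ x = v))⁻¹ j k * M k.1 v) := by
  classical
  haveI : Invertible (psub M (fun x => ¬ x = v)) :=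
    (psub M (fun x => ¬ x = v)).invertibleOfIsUnitDet h
  let e := Equiv.sumCompl (fun x : n => x = v)
  have hdet : M.det = (M.submatrix e e).det := (Matrix.det_submatrix_equiv_self e M).symm
  have h3 : M.submatrix e e = Matrix.fromBlocks
      (Matrix.of fun (x y : {x : n // x = v}) => M x.1 y.1)
      (Matrix.of fun (x : {x : n // x = v}) (y : {x : n // ¬ x = v}) => M x.1 y.1)
      (Matrix.of fun (x : {x : n // ¬ x = v}) (y : {x : n // x = v}) => M x.1 y.1)
      (psub M (fun x => ¬ x = v)) := by
    ext x y
    cases x <;> cases y <;> rfl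
  haveI : Unique {x : n // x = v} := ⟨⟨⟨v, rfl⟩⟩, fun w => Subtype.ext w.2⟩
  rw [hdet, h3, Matrix.det_fromBlocks₂₂,
    Matrix.det_unique (_ - _ * ⅟(psub M (fun x => ¬ x = v)) * _)]
  congr 1
  rw [Matrix.sub_apply, Matrix.invOf_eq_nonsing_inv]
  have hdef : (default : {x : n // x = v}).1 = v := (default : {x : n // x = v}).2
  congr 1
  · exact congrArg₂ M hdef hdef
  · rw [Matrix.mul_apply]
    rw [Finset.sum_comm]
    apply Finset.sum_congr rfl
    intro j _
    rw [Matrix.mul_apply, Finset.sum_mul]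
    apply Finset.sum_congr rfl
    intro k _
    simp only [Matrix.of_apply, hdef]

lemma my_det_transfer {α β γ : Type*} [Fintype α] [DecidableEq α] [Fintype β] [DecidableEq β]
    (M : Matrix γ γ R) (f : α → γ) (g : β → γ) (e : α ≃ β) (h : ∀ x, g (e x) = f x) :
    (M.submatrix f f).det = (M.submatrix g g).det := by
  rw [← Matrix.det_submatrix_equiv_self e (M.submatrix g g)]
  congr 1
  ext x y
  simp [Matrix.submatrix_apply, h]

end MatrixLemmas2

section GraphLemmas

variable {N : ℕ} {G : SimpleGraph (Fin N)} {S : Finset (Fin N)} {u v w : Fin N}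

lemma comp_subset : comp G S v ⊆ S := Finset.filter_subset _ _

lemma mem_comp_self (h : v ∈ S) : v ∈ comp G S v :=
  Finset.mem_filter.mpr ⟨h, SimpleGraph.Walk.nil, by simpa using h⟩

lemma comp_eq_of_mem (h : u ∈ comp G S w) : comp G S u = comp G S w := by
  obtain ⟨hu, p, hp⟩ := Finset.mem_filter.mp h
  ext x
  simp only [_root_.comp, Finset.mem_filter]
  constructor
  · rintro ⟨hx, q, hq⟩
    refine ⟨hx, p.append q, fun y hy => ?_⟩
    rw [SimpleGraph.Walk.support_append] at hy
    rcases List.mem_append.mp hy with h' | h'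
    · exact hp _ h'
    · exact hq _ (List.mem_of_mem_tail h')
  · rintro ⟨hx, q, hq⟩
    refine ⟨hx, p.reverse.append q, fun y hy => ?_⟩
    rw [SimpleGraph.Walk.support_append] at hy
    rcases List.mem_append.mp hy with h' | h'
    · rw [SimpleGraph.Walk.support_reverse, List.mem_reverse] at h'
      exact hp _ h'
    · exact hq _ (List.mem_of_mem_tail h')

lemma adj_mem_comp (hadj : G.Adj u w) (hu : u ∈ S) (hw : w ∈ S) : w ∈ comp G S u := by
  refine Finset.mem_filter.mpr ⟨hw, SimpleGraph.Walk.cons hadj SimpleGraph.Walk.nil, ?_⟩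
  intro x hx
  simp only [SimpleGraph.Walk.support_cons, SimpleGraph.Walk.support_nil,
    List.mem_cons, List.mem_singleton] at hx
  rcases hx with rfl | hx
  · exact hu
  · rcases hx with rfl | hx
    · exact hw
    · simp at hx

lemma notMem_comp_of_adj {T : SimpleGraph (Fin N)} (hT : T.IsTree) {j k : Fin N}
    (hvj : T.Adj v j) (hvk : T.Adj v k) (hjk : j ≠ k) :
    k ∉ comp T (Finset.univ.erase v) j := by
  intro hk
  obtain ⟨-, p, hp⟩ := Finset.mem_filter.mp hk
  have hv : ∀ x ∈ p.support, x ≠ v := fun x hx => (Finset.mem_erase.mp (hp x hx)).1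
  have hqv : v ∉ (p.toPath : T.Walk j k).support := by
    intro h
    exact hv v (SimpleGraph.Walk.support_toPath_subset p h) rfl
  have hr : (SimpleGraph.Walk.cons hvj.symm
      (SimpleGraph.Walk.cons hvk SimpleGraph.Walk.nil) : T.Walk j k).IsPath := by
    simp only [SimpleGraph.Walk.isPath_def, SimpleGraph.Walk.support_cons,
      SimpleGraph.Walk.support_nil]
    simp [List.nodup_cons, hvj.ne', hjk, hvk.ne]
  have huniq := hT.IsAcyclic.path_unique p.toPath ⟨_, hr⟩
  have : v ∈ (p.toPath : T.Walk j k).support := by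
    rw [huniq]
    simp
  exact hqv this

end GraphLemmas

/-- For a real skew-symmetric matrix `A` whose graph is a tree `T` and a vertex
`v`, `C_A(x)/C_{A(v)}(x) = x + Σ_{j ∈ N(v)} a_{vj}² C_{A_{j'}(v)}(x)/C_{A_j(v)}(x)`. -/
theorem stmt_6 {N : ℕ} (T : SimpleGraph (Fin N)) (hT : T.IsTree)
    (A : Matrix (Fin N) (Fin N) ℝ) (hskew : Aᵀ = -A)
    (hgraph : ∀ i j, i ≠ j → (A i j ≠ 0 ↔ T.Adj i j)) (v : Fin N) :
    (algebraMap (Polynomial ℝ) (RatFunc ℝ) (Matrix.charpoly A)) /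
        (algebraMap (Polynomial ℝ) (RatFunc ℝ)
          (Matrix.charpoly (subOn A (Finset.univ.erase v))))
      = RatFunc.X + ∑ j ∈ Finset.univ.filter (fun j => T.Adj v j),
          RatFunc.C (A v j ^ 2) *
            ((algebraMap (Polynomial ℝ) (RatFunc ℝ)
                (Matrix.charpoly (subOn A ((comp T (Finset.univ.erase v) j).erase j)))) /
              (algebraMap (Polynomial ℝ) (RatFunc ℝ)
                (Matrix.charpoly (subOn A (comp T (Finset.univ.erase v) j))))) := by
  classical
  set φ : Polynomial ℝ →+* RatFunc ℝ := algebraMap (Polynomial ℝ) (RatFunc ℝ) with hφ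
  set S₀ : Finset (Fin N) := Finset.univ.erase v with hS₀def
  set W : Matrix (Fin N) (Fin N) (RatFunc ℝ) := (charmatrix A).map φ with hWdef
  -- skew-symmetry facts
  have hdiag : ∀ i, A i i = 0 := by
    intro i
    have := congr_fun (congr_fun hskew i) i
    simp only [Matrix.transpose_apply, Matrix.neg_apply] at this
    linarith
  have hAsymm : ∀ i j, A j i = - A i j := by
    intro i j
    have := congr_fun (congr_fun hskew i) j
    simpa only [Matrix.transpose_apply, Matrix.neg_apply] using this
  -- entries of W
  have hW : ∀ i j : Fin N, W i j = if i = j then RatFunc.X else -RatFunc.C (A i j) := by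
    intro i j
    by_cases h : i = j
    · subst h
      simp [hWdef, hφ, Matrix.map_apply, charmatrix_apply_eq, hdiag i, RatFunc.algebraMap_X]
    · simp [hWdef, hφ, Matrix.map_apply, charmatrix_apply_ne _ _ _ h, h, RatFunc.algebraMap_C]
  -- the map from charpolys of principal submatrices to determinants over RatFunc
  have hpS : ∀ S : Finset (Fin N),
      φ (Matrix.charpoly (subOn A S))
        = (W.submatrix (fun x : {x // x ∈ S} => x.1) (fun x => x.1)).det := by
    intro S
    have hmat : ((charmatrix (subOn A S)).map φ)
        = W.submatrix (fun x : {x // x ∈ S} => x.1) (fun x => x.1) := by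
      ext i j
      by_cases h : i = j
      · subst h
        simp [Matrix.map_apply, charmatrix_apply_eq, subOn, hWdef]
      · have h' : i.1 ≠ j.1 := fun hh => h (Subtype.ext hh)
        simp [Matrix.map_apply, charmatrix_apply_ne _ _ _ h, charmatrix_apply_ne _ _ _ h',
          subOn, hWdef]
    rw [Matrix.charpoly, RingHom.map_det, RingHom.mapMatrix_apply, hmat]
  have hpne : ∀ S : Finset (Fin N), φ (Matrix.charpoly (subOn A S)) ≠ 0 := by
    intro S h
    have h0 : (subOn A S).charpoly = 0 :=
      (RatFunc.algebraMap_injective ℝ) (by simpa [hφ] using h)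
    exact (Matrix.charpoly_monic (subOn A S)).ne_zero h0
  -- the deleted matrix
  set dd : Matrix {x : Fin N // ¬ x = v} {x : Fin N // ¬ x = v} (RatFunc ℝ) :=
    psub W (fun x => ¬ x = v) with hdddef
  have hdd_det : dd.det = φ (Matrix.charpoly (subOn A S₀)) := by
    rw [hpS S₀]
    exact my_det_transfer W _ _
      (Equiv.subtypeEquivRight (fun x => by simp [hS₀def, Finset.mem_erase, Ne]))
      (fun x => rfl)
  have hdd_unit : IsUnit dd.det := by
    rw [hdd_det]; exact isUnit_iff_ne_zero.mpr (hpne S₀)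
  -- per-neighbor facts
  have hKsub : ∀ x : Fin N, comp T S₀ x ⊆ S₀ := fun x => comp_subset
  have hAzero : ∀ x, T.Adj v x → ∀ a b : Fin N, a ∈ comp T S₀ x → ¬ b = v →
      b ∉ comp T S₀ x → A a b = 0 := by
    intro x hx a b ha hbv hbK
    have hab2 : a ≠ b := fun h => hbK (h ▸ ha)
    by_contra hA
    have hadj := (hgraph a b hab2).mp hA
    have haS : a ∈ S₀ := hKsub x ha
    have hbS : b ∈ S₀ := Finset.mem_erase.mpr ⟨hbv, Finset.mem_univ b⟩
    have hmem : b ∈ comp T S₀ a := adj_mem_comp hadj haS hbS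
    rw [comp_eq_of_mem ha] at hmem
    exact hbK hmem
  have hmemS₀ : ∀ x : Fin N, T.Adj v x → x ∈ S₀ := by
    intro x hx
    exact Finset.mem_erase.mpr ⟨hx.ne', Finset.mem_univ x⟩
  -- block structure of dd relative to the component of a neighbor x
  have hblock : ∀ x : Fin N, T.Adj v x →
      (∀ i j (hi : i.1 ∈ comp T S₀ x) (hj : j.1 ∈ comp T S₀ x),
        dd⁻¹ i j = (psub dd (fun y : {z : Fin N // ¬ z = v} => y.1 ∈ comp T S₀ x))⁻¹
          ⟨i, hi⟩ ⟨j, hj⟩)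
      ∧ (∀ i j : {z : Fin N // ¬ z = v}, i.1 ∈ comp T S₀ x → j.1 ∉ comp T S₀ x →
        dd⁻¹ i j = 0) := by
    intro x hx
    have h1 : ∀ i j : {z : Fin N // ¬ z = v}, i.1 ∈ comp T S₀ x → ¬ j.1 ∈ comp T S₀ x →
        dd i j = 0 := by
      intro i j hi hj
      have hne : i.1 ≠ j.1 := fun h => hj (h ▸ hi)
      have := hAzero x hx i.1 j.1 hi j.2 hj
      simp [hdddef, psub_apply, hW, hne, this]
    have h2' : ∀ i j : {z : Fin N // ¬ z = v}, ¬ i.1 ∈ comp T S₀ x → j.1 ∈ comp T S₀ x →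
        dd i j = 0 := by
      intro i j hi hj
      have hne : i.1 ≠ j.1 := fun h => hi (h ▸ hj)
      have h0 : A j.1 i.1 = 0 := hAzero x hx j.1 i.1 hj i.2 hi
      have h0' : A i.1 j.1 = 0 := by
        rw [hAsymm j.1 i.1, h0, neg_zero]
      simp [hdddef, psub_apply, hW, hne, h0']
    exact my_inv_block dd _ h1 h2' hdd_unit
  -- diagonal entries of dd⁻¹ at neighbors
  have hdiaginv : ∀ x, T.Adj v x → ∀ (hxv : ¬ x = v),
      dd⁻¹ ⟨x, hxv⟩ ⟨x, hxv⟩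
        = φ (Matrix.charpoly (subOn A ((comp T S₀ x).erase x)))
          / φ (Matrix.charpoly (subOn A (comp T S₀ x))) := by
    intro x hx hxv
    have hxS₀ : x ∈ S₀ := hmemS₀ x hx
    have hxK : x ∈ comp T S₀ x := mem_comp_self hxS₀
    set Kx := comp T S₀ x with hKxdef
    set ddP : Matrix {y : {z : Fin N // ¬ z = v} // y.1 ∈ Kx}
        {y : {z : Fin N // ¬ z = v} // y.1 ∈ Kx} (RatFunc ℝ) :=
      psub dd (fun y : {z : Fin N // ¬ z = v} => y.1 ∈ Kx) with hddPdef
    set i₀ : {y : {z : Fin N // ¬ z = v} // y.1 ∈ Kx} := ⟨⟨x, hxv⟩, hxK⟩ with hi₀def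
    have hstep1 : dd⁻¹ ⟨x, hxv⟩ ⟨x, hxv⟩ = ddP⁻¹ i₀ i₀ := (hblock x hx).1 _ _ hxK hxK
    have hdets : ddP.det = φ (Matrix.charpoly (subOn A Kx)) := by
      rw [hpS Kx]
      have hrepr : ddP = W.submatrix
          (fun z : {y : {z : Fin N // ¬ z = v} // y.1 ∈ Kx} => z.1.1)
          (fun z => z.1.1) := rfl
      rw [hrepr]
      exact my_det_transfer W _ _
        ⟨fun z => ⟨z.1.1, z.2⟩,
         fun y => ⟨⟨y.1, (Finset.mem_erase.mp (hKsub x y.2)).1⟩, y.2⟩,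
         fun z => Subtype.ext (Subtype.ext rfl), fun y => Subtype.ext rfl⟩
        (fun z => rfl)
    have hdetm : (ddP.submatrix
        (fun z : {z : {y : {z : Fin N // ¬ z = v} // y.1 ∈ Kx} // ¬ z = i₀} => z.1)
        (fun z : {z : {y : {z : Fin N // ¬ z = v} // y.1 ∈ Kx} // ¬ z = i₀} => z.1)).det
        = φ (Matrix.charpoly (subOn A (Kx.erase x))) := by
      rw [hpS]
      have hrepr : ddP.submatrix
          (fun z : {z : {y : {z : Fin N // ¬ z = v} // y.1 ∈ Kx} // ¬ z = i₀} => z.1)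
          (fun z : {z : {y : {z : Fin N // ¬ z = v} // y.1 ∈ Kx} // ¬ z = i₀} => z.1)
          = W.submatrix
            (fun z : {z : {y : {z : Fin N // ¬ z = v} // y.1 ∈ Kx} // ¬ z = i₀} => z.1.1.1)
            (fun z => z.1.1.1) := rfl
      rw [hrepr]
      refine my_det_transfer W _ _
        ⟨fun z => ⟨z.1.1.1, Finset.mem_erase.mpr
            ⟨fun h => z.2 (Subtype.ext (Subtype.ext h)), z.1.2⟩⟩,
         fun y => ⟨⟨⟨y.1, (Finset.mem_erase.mp (hKsub x (Finset.mem_erase.mp y.2).2)).1⟩,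
            (Finset.mem_erase.mp y.2).2⟩,
            fun h => (Finset.mem_erase.mp y.2).1 (congrArg (fun t => t.1.1) h)⟩,
         fun z => Subtype.ext (Subtype.ext (Subtype.ext rfl)),
         fun y => Subtype.ext rfl⟩
        (fun z => rfl)
    rw [hstep1, my_inv_diag ddP i₀, hdets, hdetm]
  -- collapse the double sum
  set nbrs := Finset.univ.filter (fun j => T.Adj v j) with hnbrsdef
  set g : Fin N → RatFunc ℝ := fun x =>
    if hx : ¬ x = v then
      (if T.Adj v x then W v x * dd⁻¹ ⟨x, hx⟩ ⟨x, hx⟩ * W x v else 0)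
    else 0 with hgdef
  have hrow : ∀ j : {z : Fin N // ¬ z = v},
      (∑ k : {z : Fin N // ¬ z = v}, W v j.1 * dd⁻¹ j k * W k.1 v) = g j.1 := by
    intro j
    by_cases hadj : T.Adj v j.1
    · have hcollapse : (∑ k : {z : Fin N // ¬ z = v}, W v j.1 * dd⁻¹ j k * W k.1 v)
          = W v j.1 * dd⁻¹ j j * W j.1 v := by
        refine Finset.sum_eq_single_of_mem j (Finset.mem_univ j) ?_
        intro k _ hkj
        by_cases hadjk : T.Adj v k.1
        · have hne : j.1 ≠ k.1 := fun h => hkj (Subtype.ext h.symm)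
          have hnotmem : k.1 ∉ comp T S₀ j.1 := notMem_comp_of_adj hT hadj hadjk hne
          rw [(hblock j.1 hadj).2 j k (mem_comp_self (hmemS₀ j.1 hadj)) hnotmem]
          ring
        · have hAkv : A k.1 v = 0 := by
            by_contra hA
            exact hadjk ((T.adj_comm k.1 v).mp ((hgraph k.1 v k.2).mp hA))
          rw [hW k.1 v, if_neg k.2, hAkv]
          simp
      rw [hcollapse]
      simp only [hgdef]
      rw [dif_pos j.2, if_pos hadj, Subtype.coe_eta]
    · have hAvj : A v j.1 = 0 := by
        by_contra hA
        exact hadj ((hgraph v j.1 (fun h => j.2 h.symm)).mp hA)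
      have hzero : (∑ k : {z : Fin N // ¬ z = v}, W v j.1 * dd⁻¹ j k * W k.1 v) = 0 := by
        refine Finset.sum_eq_zero (fun k _ => ?_)
        rw [hW v j.1, if_neg (fun h => j.2 h.symm), hAvj]
        simp
      rw [hzero]
      simp [hgdef, hadj]
  have hsum2 : (∑ j : {z : Fin N // ¬ z = v}, ∑ k : {z : Fin N // ¬ z = v},
      W v j.1 * dd⁻¹ j k * W k.1 v)
      = - ∑ x ∈ nbrs, RatFunc.C (A v x ^ 2) *
          (φ (Matrix.charpoly (subOn A ((comp T S₀ x).erase x)))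
            / φ (Matrix.charpoly (subOn A (comp T S₀ x)))) := by
    rw [Finset.sum_congr rfl (fun j _ => hrow j)]
    rw [← Finset.sum_subtype S₀ (fun x => by simp [hS₀def, Finset.mem_erase, Ne]) g]
    have hsubset : nbrs ⊆ S₀ := by
      intro x hxmem
      exact hmemS₀ x (Finset.mem_filter.mp hxmem).2
    have hvanish : ∀ x ∈ S₀, x ∉ nbrs → g x = 0 := by
      intro x hxS hxn
      have hadj : ¬ T.Adj v x := fun h => hxn (Finset.mem_filter.mpr ⟨Finset.mem_univ x, h⟩)
      simp [hgdef, hadj]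
    rw [← Finset.sum_subset hsubset hvanish]
    rw [← Finset.sum_neg_distrib]
    apply Finset.sum_congr rfl
    intro x hxmem
    have hadj : T.Adj v x := (Finset.mem_filter.mp hxmem).2
    have hxv : ¬ x = v := hadj.ne'
    have hvx : ¬ v = x := hadj.ne
    simp only [hgdef]
    rw [dif_pos hxv, if_pos hadj, hdiaginv x hadj hxv, hW v x, if_neg hvx,
      hW x v, if_neg hxv, hAsymm v x, map_neg, map_pow]
    ring
  -- Schur complement identity and conclusion
  have hmain := my_schur W v hdd_unit
  rw [hsum2] at hmain
  have hWvv : W v v = RatFunc.X := by rw [hW v v, if_pos rfl]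
  rw [hWvv, hdd_det, sub_neg_eq_add] at hmain
  have hfin : φ (Matrix.charpoly A) = φ (Matrix.charpoly (subOn A S₀)) *
      (RatFunc.X + ∑ x ∈ nbrs, RatFunc.C (A v x ^ 2) *
        (φ (Matrix.charpoly (subOn A ((comp T S₀ x).erase x)))
          / φ (Matrix.charpoly (subOn A (comp T S₀ x))))) := by
    rw [Matrix.charpoly, RingHom.map_det, RingHom.mapMatrix_apply]
    exact hmain
  rw [hfin, mul_div_cancel_left₀ _ (hpne S₀)]
end
end

section
/- Let A be an n×n real skew-symmetric matrix and v an index such that the principal submatrix A(v) has 0 as an eigenvalue of multiplicity at least 2. Then 0 is an eigenvalue of A, and hence the eigenvalues of A(v) do not strictly interlace those of A. -/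
open Polynomial Matrix

private lemma rootMultiplicity_prod_X_sub_C' {K : Type*} [Field K] [DecidableEq K] {m : ℕ}
    (c : Fin m → K) (a : K) :
    ((∏ j, (X - C (c j))).rootMultiplicity a) =
      (Finset.univ.filter (fun j => c j = a)).card := by
  classical
  rw [← Polynomial.count_roots]
  have h : (∏ j, (X - C (c j))) = ((Finset.univ.val.map c).map (fun b => X - C b)).prod := by
    simp only [Finset.prod, Multiset.map_map]
    rfl
  rw [h, roots_multiset_prod_X_sub_C, Multiset.count_map]
  rw [Finset.card, Finset.filter_val]
  congr 1
  exact Multiset.filter_congr (fun x _ => by rw [eq_comm])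

private lemma charpoly_conj_units' {m : Type*} [Fintype m] [DecidableEq m] {K : Type*}
    [CommRing K] (U V P : Matrix m m K) (hUV : U * V = 1) (hVU : V * U = 1) :
    (U * P * V).charpoly = P.charpoly := by
  have key : (C : K →+* K[X]).mapMatrix U * charmatrix P * (C : K →+* K[X]).mapMatrix V
      = charmatrix (U * P * V) := by
    unfold charmatrix
    rw [Matrix.mul_sub, Matrix.sub_mul]
    congr 1
    · rw [Matrix.mul_assoc, (Matrix.scalar_commute (X : K[X]) (Commute.all _) _).eq,
        ← Matrix.mul_assoc, ← _root_.map_mul, hUV, _root_.map_one, one_mul]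
    · rw [← _root_.map_mul, ← _root_.map_mul]
  unfold Matrix.charpoly
  rw [← key, det_mul, det_mul, mul_comm, ← mul_assoc, ← det_mul,
    ← map_mul ((C : K →+* K[X]).mapMatrix) V U, hVU, _root_.map_one, det_one, one_mul]

/-- If the principal submatrix `A(v)` of a real skew-symmetric matrix `A` has
`0` as an eigenvalue of multiplicity at least `2`, then `0` is an eigenvalue of
`A`, and the eigenvalues of `A(v)` do not strictly interlace those of `A`. -/
theorem stmt_9 {n : ℕ} (A : Matrix (Fin (n + 1)) (Fin (n + 1)) ℝ) (hskew : Aᵀ = -A)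
    (v : Fin (n + 1)) (B : Matrix (Fin n) (Fin n) ℝ)
    (hB : B = A.submatrix v.succAbove v.succAbove)
    (hmult : 2 ≤ (Matrix.charpoly B).rootMultiplicity 0) :
    (Matrix.charpoly A).IsRoot 0 ∧
    ¬ ∃ (lam : Fin (n + 1) → ℝ) (mu : Fin n → ℝ),
        (A.map (Complex.ofReal : ℝ → ℂ)).charpoly
            = ∏ j, (X - C (Complex.I * (lam j : ℂ))) ∧
        (B.map (Complex.ofReal : ℝ → ℂ)).charpoly
            = ∏ j, (X - C (Complex.I * (mu j : ℂ))) ∧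
        ∀ j : Fin n, lam j.castSucc < mu j ∧ mu j < lam j.succ := by
  classical
  have hBskew : Bᵀ = -B := by
    rw [hB, transpose_submatrix, hskew]
    ext i j
    simp
  have hentry : ∀ i j, B j i = -B i j := by
    intro i j
    have := congrFun (congrFun hBskew i) j
    simpa using this
  set f : ℝ →+* ℂ := Complex.ofRealHom with hf
  have hX2 : (X : ℝ[X]) ^ 2 ∣ B.charpoly := by
    have h := Polynomial.pow_rootMultiplicity_dvd B.charpoly 0
    rw [map_zero, sub_zero] at h
    exact dvd_trans (pow_dvd_pow _ hmult) h
  have hmapeq : B.map (Complex.ofReal : ℝ → ℂ) = B.map f := rfl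
  have hX2C : (X : ℂ[X]) ^ 2 ∣ (B.map (Complex.ofReal : ℝ → ℂ)).charpoly := by
    rw [hmapeq, Matrix.charpoly_map]
    obtain ⟨q, hq⟩ := hX2
    exact ⟨q.map f, by rw [hq, Polynomial.map_mul, Polynomial.map_pow, Polynomial.map_X]⟩
  have hchB0 : (B.map (Complex.ofReal : ℝ → ℂ)).charpoly ≠ 0 := (charpoly_monic _).ne_zero
  have hrm2 : 2 ≤ (B.map (Complex.ofReal : ℝ → ℂ)).charpoly.rootMultiplicity 0 := by
    rw [Polynomial.le_rootMultiplicity_iff hchB0, map_zero, sub_zero]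
    exact hX2C
  constructor
  · -- Part 1 : 0 is a root of charpoly A
    set M : Matrix (Fin n) (Fin n) ℂ := B.map (Complex.ofReal : ℝ → ℂ) with hM
    have hMH : Mᴴ = -M := by
      ext i j
      simp only [conjTranspose_apply, neg_apply, hM, Matrix.map_apply, hentry i j]
      simp [Complex.conj_ofReal]
    have hH : (Complex.I • M).IsHermitian := by
      rw [Matrix.IsHermitian, conjTranspose_smul, hMH, Complex.star_def, Complex.conj_I,
        neg_smul, smul_neg, neg_neg]
    set U : Matrix (Fin n) (Fin n) ℂ := (hH.eigenvectorUnitary : Matrix (Fin n) (Fin n) ℂ)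
      with hU
    have hU1 : U * star U = 1 := mem_unitaryGroup_iff.mp hH.eigenvectorUnitary.2
    have hU2 : star U * U = 1 := mem_unitaryGroup_iff'.mp hH.eigenvectorUnitary.2
    set d : Fin n → ℂ := fun i => -Complex.I * (hH.eigenvalues i : ℂ) with hd
    have hMdec : M = U * diagonal d * star U := by
      have hspec := hH.spectral_theorem
      calc M = (-Complex.I) • (Complex.I • M) := by
              rw [smul_smul, neg_mul, Complex.I_mul_I, neg_neg, one_smul]
        _ = (-Complex.I) • (U * diagonal (RCLike.ofReal ∘ hH.eigenvalues) * star U) := by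
              exact congrArg _ hspec
        _ = U * ((-Complex.I) • diagonal (RCLike.ofReal ∘ hH.eigenvalues)) * star U := by
              rw [← Matrix.smul_mul, ← Matrix.mul_smul]
        _ = U * diagonal d * star U := by
              congr 1
              congr 1
              ext i j
              rcases eq_or_ne i j with rfl | hij
              · simp [hd]
              · simp [diagonal_apply_ne _ hij]
    have hchM : M.charpoly = ∏ i, (X - C (d i)) := by
      rw [hMdec, charpoly_conj_units' _ _ _ hU1 hU2,
        charpoly_of_upperTriangular _ (blockTriangular_diagonal d)]
      simp
    have hdet1 : U.det * (star U).det = 1 := by rw [← det_mul, hU1, det_one]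
    have hdetU : IsUnit U.det := IsUnit.of_mul_eq_one _ hdet1
    have hdetsU : IsUnit (star U).det :=
      IsUnit.of_mul_eq_one _ (by rw [mul_comm] at hdet1; exact hdet1)
    have hrank : M.rank = Fintype.card {i // d i ≠ 0} := by
      rw [hMdec, rank_mul_eq_left_of_isUnit_det (star U) _ hdetsU,
        rank_mul_eq_right_of_isUnit_det U _ hdetU, rank_diagonal]
    have hcard : 2 ≤ (Finset.univ.filter (fun i => d i = 0)).card := by
      rw [← rootMultiplicity_prod_X_sub_C' d 0, ← hchM]
      exact hrm2
    have hcardsplit :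
        (Finset.univ.filter (fun i => d i = 0)).card + Fintype.card {i // d i ≠ 0} = n := by
      rw [Fintype.card_subtype]
      rw [Finset.card_filter_add_card_filter_not]
      · simp
    have hnull : 2 ≤ Module.finrank ℂ (LinearMap.ker M.mulVecLin) := by
      have h1 := LinearMap.finrank_range_add_finrank_ker M.mulVecLin
      have h2 : M.rank = Module.finrank ℂ (LinearMap.range M.mulVecLin) := rfl
      have h3 : Module.finrank ℂ (Fin n → ℂ) = n := by simp
      rw [h3] at h1
      omega
    set c : Fin n → ℂ := fun j => ((A v (v.succAbove j) : ℝ) : ℂ) with hc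
    let g : (Fin n → ℂ) →ₗ[ℂ] ℂ :=
      { toFun := fun x => ∑ j, c j * x j
        map_add' := by intro x y; simp [mul_add, Finset.sum_add_distrib]
        map_smul' := by intro a x; simp [Finset.mul_sum, mul_left_comm] }
    set g' : (LinearMap.ker M.mulVecLin) →ₗ[ℂ] ℂ :=
      g.comp (LinearMap.ker M.mulVecLin).subtype with hg'
    have h3 := LinearMap.finrank_range_add_finrank_ker g'
    have h4 : Module.finrank ℂ (LinearMap.range g') ≤ 1 := by
      have := Submodule.finrank_le (LinearMap.range g')
      simpa using this
    have h5 : 0 < Module.finrank ℂ (LinearMap.ker g') := by omega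
    have : Nontrivial (LinearMap.ker g') := Module.finrank_pos_iff.mp h5
    obtain ⟨y, hy0⟩ := exists_ne (0 : LinearMap.ker g')
    set x : Fin n → ℂ := ((y : LinearMap.ker M.mulVecLin) : Fin n → ℂ) with hx
    have hxker : M *ᵥ x = 0 := (y : LinearMap.ker M.mulVecLin).2
    have hxc : ∑ j, c j * x j = 0 := y.2
    have hxne : x ≠ 0 := by
      intro h
      exact hy0 (Subtype.ext (Subtype.ext h))
    set z : Fin (n + 1) → ℂ := v.insertNth 0 x with hz
    have hzv : z v = 0 := by simp [hz]
    have hzs : ∀ j, z (v.succAbove j) = x j := fun j => by simp [hz]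
    have hzne : z ≠ 0 := by
      intro h
      apply hxne
      funext j
      have := congrFun h (v.succAbove j)
      rw [hzs j] at this
      simpa using this
    have hAz : (A.map (Complex.ofReal : ℝ → ℂ)) *ᵥ z = 0 := by
      funext i
      have hsplit : ((A.map (Complex.ofReal : ℝ → ℂ)) *ᵥ z) i
          = ∑ k, ((A i k : ℝ) : ℂ) * z k := by
        simp [Matrix.mulVec, dotProduct, Matrix.map_apply]
      rw [hsplit, Fin.sum_univ_succAbove (fun k => ((A i k : ℝ) : ℂ) * z k) v, hzv, mul_zero,
        zero_add]
      rcases eq_or_ne i v with rfl | hiv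
      · rw [Pi.zero_apply]
        rw [← hxc]
        exact Finset.sum_congr rfl fun j _ => by rw [hzs j]
      · obtain ⟨j0, hj0⟩ := Fin.exists_succAbove_eq hiv
        have hk : (M *ᵥ x) j0 = 0 := by rw [hxker]; rfl
        rw [Pi.zero_apply, ← hk]
        simp only [Matrix.mulVec, dotProduct, hM, Matrix.map_apply, hB,
          Matrix.submatrix_apply]
        refine Finset.sum_congr rfl fun j _ => ?_
        rw [hzs j, hj0]
    have hdet : (A.map (Complex.ofReal : ℝ → ℂ)).det = 0 := by
      rw [← Matrix.exists_mulVec_eq_zero_iff]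
      exact ⟨z, hzne, hAz⟩
    have hdetA : A.det = 0 := by
      have h0 : ((A.det : ℝ) : ℂ) = 0 := by
        rw [show ((A.det : ℝ) : ℂ) = f A.det from rfl, RingHom.map_det]
        exact hdet
      exact_mod_cast h0
    rw [Polynomial.IsRoot, ← Polynomial.coeff_zero_eq_eval_zero]
    have hsg := Matrix.det_eq_sign_charpoly_coeff A
    rw [hdetA] at hsg
    rcases mul_eq_zero.mp hsg.symm with h | h
    · exact absurd h (pow_ne_zero _ (by norm_num))
    · exact h
  · -- Part 2 : no strict interlacing
    rintro ⟨lam, mu, _hAc, hBc, hlt⟩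
    have hfilter : Finset.univ.filter (fun j => Complex.I * (mu j : ℂ) = 0)
        = Finset.univ.filter (fun j : Fin n => mu j = 0) := by
      apply Finset.filter_congr
      intro j _
      simp [Complex.I_ne_zero]
    have hcnt : 2 ≤ (Finset.univ.filter (fun j : Fin n => mu j = 0)).card := by
      rw [← hfilter, ← rootMultiplicity_prod_X_sub_C' (fun j => Complex.I * (mu j : ℂ)) 0,
        ← hBc]
      exact hrm2
    have step : ∀ p q : Fin n, (q : ℕ) = (p : ℕ) + 1 → mu p < mu q := by
      intro p q h
      have h1 := (hlt p).2
      have h2 := (hlt q).1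
      have e : p.succ = q.castSucc := by
        apply Fin.ext
        simp [h]
      rw [e] at h1
      exact h1.trans h2
    have key : ∀ dk : ℕ, ∀ p q : Fin n, (q : ℕ) = (p : ℕ) + dk + 1 → mu p < mu q := by
      intro dk
      induction dk with
      | zero => intro p q h; exact step p q (by omega)
      | succ dd ih =>
        intro p q h
        have hm : (p : ℕ) + 1 < n := by have := q.isLt; omega
        exact (step p ⟨(p : ℕ) + 1, hm⟩ rfl).trans (ih ⟨(p : ℕ) + 1, hm⟩ q (by simp; omega))
    have hmono : ∀ p q : Fin n, p < q → mu p < mu q := by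
      intro p q h
      rw [Fin.lt_def] at h
      exact key ((q : ℕ) - (p : ℕ) - 1) p q (by omega)
    obtain ⟨a, ha, b, hb, hab⟩ := Finset.one_lt_card.mp (lt_of_lt_of_le one_lt_two hcnt)
    rw [Finset.mem_filter] at ha hb
    rcases hab.lt_or_gt with h | h
    · have := hmono a b h
      rw [ha.2, hb.2] at this
      exact lt_irrefl _ this
    · have := hmono b a h
      rw [ha.2, hb.2] at this
      exact lt_irrefl _ this
end

section
/- Let A be an n×n real skew-symmetric matrix with n distinct eigenvalues, let B = A(n) (the principal submatrix deleting the last row and column), and suppose A and B have no common eigenvalue. Let p, q be odd real polynomials of degree at most n-1 and n-2 respectively such that p(A) + q̃(B) has zero entries in every position (i,j) where A has a nonzero entry or where i = j. If moreover p(A) + q̃(B) = 0, then p and q are the zero polynomials. Here q̃(B) denotes q(B) padded with a final zero row and zero column to size n×n. -/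
open Polynomial Matrix

/-- `W` padded with a final zero row and zero column. -/
def pad {n : ℕ} (W : Matrix (Fin n) (Fin n) ℝ) : Matrix (Fin (n + 1)) (Fin (n + 1)) ℝ :=
  fun i j =>
    if h1 : (i : ℕ) < n then if h2 : (j : ℕ) < n then W ⟨i, h1⟩ ⟨j, h2⟩ else 0 else 0

lemma aeval_mulVec {m : ℕ} (M : Matrix (Fin m) (Fin m) ℂ) (v : Fin m → ℂ) (μ : ℂ)
    (h : M *ᵥ v = μ • v) (r : ℂ[X]) : (aeval M r) *ᵥ v = r.eval μ • v := by
  induction r using Polynomial.induction_on with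
  | C a =>
      simp [Algebra.algebraMap_eq_smul_one, Matrix.smul_mulVec, Matrix.one_mulVec]
  | add f g hf hg =>
      simp [Matrix.add_mulVec, hf, hg, add_smul]
  | monomial k a ih =>
      have h1 : (C a * X ^ (k+1) : ℂ[X]) = (C a * X ^ k) * X := by ring
      rw [h1, _root_.map_mul, ← Matrix.mulVec_mulVec, aeval_X, h, Matrix.mulVec_smul, ih,
        smul_smul]
      congr 1
      simp only [eval_mul, eval_pow, eval_C, eval_X]
      ring

lemma charpoly_isRoot_iff {m : ℕ} (M : Matrix (Fin m) (Fin m) ℂ) (μ : ℂ) :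
    M.charpoly.IsRoot μ ↔ ∃ v, v ≠ 0 ∧ M *ᵥ v = μ • v := by
  have hdet : M.charpoly.eval μ = (μ • (1 : Matrix (Fin m) (Fin m) ℂ) - M).det := by
    rw [Matrix.charpoly, show (Polynomial.eval μ) = ⇑(Polynomial.evalRingHom μ) from rfl,
      RingHom.map_det]
    congr 1
    ext i j
    by_cases hij : i = j
    · subst hij; simp [Matrix.one_apply]
    · simp [charmatrix_apply_ne _ _ _ hij, Matrix.one_apply, hij]
  rw [Polynomial.IsRoot, hdet, ← Matrix.exists_mulVec_eq_zero_iff]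
  constructor
  · rintro ⟨v, hv, h⟩
    refine ⟨v, hv, ?_⟩
    rw [Matrix.sub_mulVec, Matrix.smul_mulVec, Matrix.one_mulVec, sub_eq_zero] at h
    exact h.symm
  · rintro ⟨v, hv, h⟩
    refine ⟨v, hv, ?_⟩
    rw [Matrix.sub_mulVec, Matrix.smul_mulVec, Matrix.one_mulVec, h, sub_self]

lemma aeval_map_complex {m : ℕ} (M : Matrix (Fin m) (Fin m) ℝ) (r : ℝ[X]) :
    (aeval M r).map (Complex.ofReal : ℝ → ℂ) =
      aeval (M.map (Complex.ofReal : ℝ → ℂ)) (r.map (algebraMap ℝ ℂ)) := by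
  rw [Polynomial.aeval_map_algebraMap]
  have := Polynomial.aeval_algHom_apply (AlgHom.mapMatrix (R := ℝ) (Algebra.ofId ℝ ℂ)) M r
  have hf : ⇑(Algebra.ofId ℝ ℂ) = (Complex.ofReal : ℝ → ℂ) := by funext x; rfl
  simpa [AlgHom.mapMatrix_apply, Algebra.ofId_apply, hf] using this.symm

/-- Let `A` be real skew-symmetric with distinct eigenvalues, `B = A(n)` the
principal submatrix deleting the last row and column, with `A` and `B` having
no common eigenvalue.  If `p`, `q` are odd polynomials of degree at most
`n-1`, `n-2` respectively, `p(A) + q̃(B)` vanishes at every position where `A`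
is nonzero or on the diagonal, and moreover `p(A) + q̃(B) = 0`, then `p = 0`
and `q = 0`. -/
theorem stmt_19 {n : ℕ} (A : Matrix (Fin (n + 1)) (Fin (n + 1)) ℝ) (hskew : Aᵀ = -A)
    (l : Fin (n + 1) → ℂ) (hl : Function.Injective l)
    (hspecA : (A.map (Complex.ofReal : ℝ → ℂ)).charpoly = ∏ j, (X - C (l j)))
    (B : Matrix (Fin n) (Fin n) ℝ)
    (hB : B = A.submatrix Fin.castSucc Fin.castSucc)
    (hdisj : ∀ z : ℂ, ¬ (((A.map (Complex.ofReal : ℝ → ℂ)).charpoly).IsRoot z ∧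
        ((B.map (Complex.ofReal : ℝ → ℂ)).charpoly).IsRoot z))
    (p q : Polynomial ℝ)
    (hpodd : ∀ k, Even k → p.coeff k = 0) (hqodd : ∀ k, Even k → q.coeff k = 0)
    (hpdeg : p.natDegree ≤ n) (hqdeg : q.natDegree ≤ n - 1)
    (hzero : ∀ i j : Fin (n + 1), (A i j ≠ 0 ∨ i = j) →
        (Polynomial.aeval A p + pad (Polynomial.aeval B q)) i j = 0)
    (hsum : Polynomial.aeval A p + pad (Polynomial.aeval B q) = 0) :
    p = 0 ∧ q = 0 := by
  classical
  set A' := A.map (Complex.ofReal : ℝ → ℂ) with hA'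
  set B' := B.map (Complex.ofReal : ℝ → ℂ) with hB'
  set P := p.map (algebraMap ℝ ℂ) with hP
  set Q := q.map (algebraMap ℝ ℂ) with hQ
  have hM0 : Polynomial.aeval A p = -pad (Polynomial.aeval B q) :=
    eq_neg_of_add_eq_zero_left hsum
  have hrow : ∀ jj : Fin (n+1), (Polynomial.aeval A p) (Fin.last n) jj = 0 := by
    intro jj
    rw [hM0]
    simp [pad, Matrix.neg_apply]
  have haP : Polynomial.aeval A' P = (Polynomial.aeval A p).map (Complex.ofReal : ℝ → ℂ) :=
    (aeval_map_complex A p).symm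
  have hAB : ∀ (i k : Fin n), A' i.castSucc k.castSucc = B' i k := by
    intro i k
    simp [hA', hB', hB, Matrix.map_apply, Matrix.submatrix_apply]
  -- Step 1 : p = 0
  have hProot : ∀ j, P.eval (l j) = 0 := by
    intro j
    have hrootA : (A'.charpoly).IsRoot (l j) := by
      rw [hspecA]
      simp only [Polynomial.IsRoot, Polynomial.eval_prod, Polynomial.eval_sub,
        Polynomial.eval_X, Polynomial.eval_C]
      exact Finset.prod_eq_zero (Finset.mem_univ j) (by ring)
    obtain ⟨v, hv0, hvec⟩ := (charpoly_isRoot_iff A' (l j)).mp hrootA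
    by_cases ht : v (Fin.last n) = 0
    · set u : Fin n → ℂ := fun i => v i.castSucc with hu
      have hu0 : u ≠ 0 := by
        intro h0
        apply hv0
        funext i
        refine Fin.lastCases ?_ ?_ i
        · exact ht
        · intro i'
          exact congrFun h0 i'
      have hBu : B' *ᵥ u = l j • u := by
        funext i
        have h2 := congrFun hvec i.castSucc
        simp only [Matrix.mulVec, dotProduct, Pi.smul_apply, smul_eq_mul] at h2 ⊢
        rw [Fin.sum_univ_castSucc, ht, mul_zero, add_zero] at h2
        rw [← h2]
        exact Finset.sum_congr rfl fun k _ => by rw [hAB i k]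
      have hrootB : (B'.charpoly).IsRoot (l j) :=
        (charpoly_isRoot_iff B' (l j)).mpr ⟨u, hu0, hBu⟩
      exact absurd ⟨hrootA, hrootB⟩ (hdisj (l j))
    · have h1 : ((Polynomial.aeval A' P) *ᵥ v) (Fin.last n) = P.eval (l j) * v (Fin.last n) := by
        rw [aeval_mulVec A' v (l j) hvec P]
        simp
      have h2 : ((Polynomial.aeval A' P) *ᵥ v) (Fin.last n) = 0 := by
        rw [haP]
        simp only [Matrix.mulVec, dotProduct, Matrix.map_apply]
        refine Finset.sum_eq_zero fun k _ => ?_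
        rw [hrow k]
        simp
      rw [h1] at h2
      exact (mul_eq_zero.mp h2).resolve_right ht
  have hP0 : P = 0 := by
    by_contra hPne
    have hsub : Finset.image l Finset.univ ⊆ P.roots.toFinset := by
      intro z hz
      simp only [Finset.mem_image] at hz
      obtain ⟨j, _, rfl⟩ := hz
      rw [Multiset.mem_toFinset, Polynomial.mem_roots hPne]
      exact hProot j
    have hc1 : (Finset.image l Finset.univ).card = n + 1 := by
      rw [Finset.card_image_of_injective _ hl, Finset.card_univ, Fintype.card_fin]
    have hc2 : P.roots.toFinset.card ≤ P.natDegree :=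
      le_trans (Multiset.toFinset_card_le _) (Polynomial.card_roots' P)
    have hdeg : P.natDegree ≤ n := le_trans Polynomial.natDegree_map_le hpdeg
    have hcard := Finset.card_le_card hsub
    omega
  have hp0 : p = 0 := by
    apply Polynomial.map_injective (algebraMap ℝ ℂ) (algebraMap ℝ ℂ).injective
    rw [Polynomial.map_zero, ← hP, hP0]
  refine ⟨hp0, ?_⟩
  -- Step 2 : q = 0
  have hpadq : Polynomial.aeval B q = 0 := by
    have h0 : pad (Polynomial.aeval B q) = 0 := by
      rw [hp0] at hsum
      simpa using hsum
    ext i k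
    have h1 := congrFun (congrFun h0 i.castSucc) k.castSucc
    simpa [pad] using h1
  by_cases hn : n = 0
  · subst hn
    have hd0 : q.natDegree ≤ 0 := hqdeg
    have := Polynomial.eq_C_of_natDegree_le_zero hd0
    rw [hqodd 0 Even.zero, Polynomial.C_0] at this
    exact this
  · have hQ0 : Polynomial.aeval B' Q = 0 := by
      have h := aeval_map_complex B q
      rw [hpadq] at h
      rw [hQ, hB', ← h]
      ext i k
      simp [Matrix.map_apply]
    set H : Matrix (Fin n) (Fin n) ℂ := Complex.I • B' with hH
    have hBskew : ∀ i k, B k i = - B i k := by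
      intro i k
      rw [hB]
      simp only [Matrix.submatrix_apply]
      have h1 := congrFun (congrFun hskew i.castSucc) k.castSucc
      simpa [Matrix.transpose_apply, Matrix.neg_apply] using h1
    have hHerm : H.IsHermitian := by
      show Hᴴ = H
      ext i k
      simp only [Matrix.conjTranspose_apply, hH, Matrix.smul_apply, smul_eq_mul, hB',
        Matrix.map_apply]
      rw [hBskew k i]
      simp [Complex.star_def, _root_.map_mul, Complex.conj_I, Complex.conj_ofReal]
    set w : Fin n → (Fin n → ℂ) := fun k => ⇑(hHerm.eigenvectorBasis k) with hw
    set ν : Fin n → ℂ := fun k => (-Complex.I) * ((hHerm.eigenvalues k : ℝ) : ℂ) with hν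
    have hwvec : ∀ k, B' *ᵥ w k = ν k • w k := by
      intro k
      have h1 := hHerm.mulVec_eigenvectorBasis k
      have h2 : Complex.I • (B' *ᵥ w k) = ((hHerm.eigenvalues k : ℝ) : ℂ) • w k := by
        rw [← Matrix.smul_mulVec, ← hH, hw, h1]
        funext i
        simp [Complex.real_smul]
      have hII : (-Complex.I) * Complex.I = 1 := by
        rw [neg_mul, Complex.I_mul_I, neg_neg]
      funext i
      have h3 := congrFun h2 i
      simp only [Pi.smul_apply, smul_eq_mul] at h3 ⊢
      calc (B' *ᵥ w k) i = ((-Complex.I) * Complex.I) * (B' *ᵥ w k) i := by rw [hII, one_mul]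
        _ = (-Complex.I) * (Complex.I * (B' *ᵥ w k) i) := by ring
        _ = (-Complex.I) * (((hHerm.eigenvalues k : ℝ) : ℂ) * w k i) := by rw [h3]
        _ = ν k * w k i := by rw [hν]; ring
    have hw0 : ∀ k, w k ≠ 0 := by
      intro k h0
      apply hHerm.eigenvectorBasis.toBasis.ne_zero k
      rw [OrthonormalBasis.coe_toBasis]
      ext i
      exact congrFun h0 i
    have hνinj : Function.Injective ν := by
      intro j k hjk
      by_contra hne
      set b : Fin n → ℂ := fun i => A' (Fin.last n) i.castSucc with hb
      obtain ⟨u, hu0, huvec, hbu⟩ :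
          ∃ u : Fin n → ℂ, u ≠ 0 ∧ B' *ᵥ u = ν j • u ∧ (∑ i, b i * u i) = 0 := by
        by_cases hd : (∑ i, b i * w j i) = 0
        · exact ⟨w j, hw0 j, hwvec j, hd⟩
        · refine ⟨(∑ i, b i * w j i) • w k - (∑ i, b i * w k i) • w j, ?_, ?_, ?_⟩
          · intro h0
            have hww : ((∑ i, b i * w j i) • hHerm.eigenvectorBasis k
                - (∑ i, b i * w k i) • hHerm.eigenvectorBasis j : EuclideanSpace ℂ (Fin n)) = 0 := by
              ext i
              exact congrFun h0 i
            have ho := hHerm.eigenvectorBasis.orthonormal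
            have hinner : (inner ℂ (hHerm.eigenvectorBasis k)
                ((∑ i, b i * w j i) • hHerm.eigenvectorBasis k
                  - (∑ i, b i * w k i) • hHerm.eigenvectorBasis j) : ℂ)
                = (∑ i, b i * w j i) := by
              rw [inner_sub_right, inner_smul_right, inner_smul_right,
                orthonormal_iff_ite.mp ho k k, orthonormal_iff_ite.mp ho k j]
              simp [Ne.symm hne]
            rw [hww, inner_zero_right] at hinner
            exact hd hinner.symm
          · rw [Matrix.mulVec_sub, Matrix.mulVec_smul, Matrix.mulVec_smul, hwvec j, hwvec k,
              ← hjk, smul_sub, smul_smul, smul_smul, smul_smul, smul_smul, mul_comm]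
            congr 2
            rw [mul_comm]
          · simp only [Pi.sub_apply, Pi.smul_apply, smul_eq_mul]
            have hterm : ∀ x, b x * ((∑ i, b i * w j i) * w k x - (∑ i, b i * w k i) * w j x)
                = (∑ i, b i * w j i) * (b x * w k x) - (∑ i, b i * w k i) * (b x * w j x) := by
              intro x; ring
            rw [Finset.sum_congr rfl fun x _ => hterm x, Finset.sum_sub_distrib,
              ← Finset.mul_sum, ← Finset.mul_sum]
            ring
      set v : Fin (n+1) → ℂ := Fin.snoc u 0 with hv
      have hAv : A' *ᵥ v = ν j • v := by
        funext i
        induction i using Fin.lastCases with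
        | last =>
            simp only [Matrix.mulVec, dotProduct, Pi.smul_apply, smul_eq_mul]
            rw [Fin.sum_univ_castSucc]
            simp only [hv, Fin.snoc_castSucc, Fin.snoc_last, mul_zero, add_zero]
            exact hbu
        | cast i =>
            simp only [Matrix.mulVec, dotProduct, Pi.smul_apply, smul_eq_mul]
            rw [Fin.sum_univ_castSucc]
            simp only [hv, Fin.snoc_castSucc, Fin.snoc_last, mul_zero, add_zero]
            have h4 := congrFun huvec i
            simp only [Matrix.mulVec, dotProduct, Pi.smul_apply, smul_eq_mul] at h4
            rw [← h4]
            exact Finset.sum_congr rfl fun k' _ => by rw [hAB i k']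
      have hvne : v ≠ 0 := by
        intro h0
        apply hu0
        funext i
        have h5 := congrFun h0 i.castSucc
        simpa [hv, Fin.snoc_castSucc] using h5
      have hrootA : (A'.charpoly).IsRoot (ν j) :=
        (charpoly_isRoot_iff _ _).mpr ⟨v, hvne, hAv⟩
      have hrootB : (B'.charpoly).IsRoot (ν j) :=
        (charpoly_isRoot_iff _ _).mpr ⟨w j, hw0 j, hwvec j⟩
      exact hdisj (ν j) ⟨hrootA, hrootB⟩
    have hQroot : ∀ k, Q.eval (ν k) = 0 := by
      intro k
      have h6 := aeval_mulVec B' (w k) (ν k) (hwvec k) Q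
      rw [hQ0, Matrix.zero_mulVec] at h6
      exact ((smul_eq_zero.mp h6.symm).resolve_right (hw0 k))
    have hQ0' : Q = 0 := by
      by_contra hQne
      have hsub : Finset.image ν Finset.univ ⊆ Q.roots.toFinset := by
        intro z hz
        simp only [Finset.mem_image] at hz
        obtain ⟨k, _, rfl⟩ := hz
        rw [Multiset.mem_toFinset, Polynomial.mem_roots hQne]
        exact hQroot k
      have hc1 : (Finset.image ν Finset.univ).card = n := by
        rw [Finset.card_image_of_injective _ hνinj, Finset.card_univ, Fintype.card_fin]
      have hc2 : Q.roots.toFinset.card ≤ Q.natDegree :=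
        le_trans (Multiset.toFinset_card_le _) (Polynomial.card_roots' Q)
      have hdeg : Q.natDegree ≤ n - 1 := le_trans Polynomial.natDegree_map_le hqdeg
      have hcard := Finset.card_le_card hsub
      omega
    apply Polynomial.map_injective (algebraMap ℝ ℂ) (algebraMap ℝ ℂ).injective
    rw [Polynomial.map_zero, ← hQ, hQ0']
end
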